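/- Let P ⊆ {0,1}^ℕ be a measurable set of branches with μ(P) > 0. Then there exists an everywhere thick subtree T ⊆ {0,1}^* whose root is the empty word ε such that every branch all of whose finite prefixes belong to T lies in P (i.e. vec(T) ⊆ P). -/

import Mathlib

open MeasureTheory

/-- The cylinder of a finite binary word `w`: the set of branches of the infinite
binary tree that visit the node `w`, i.e. have `w` as a prefix. -/
def cylinder (w : List Bool) : Set (ℕ → Bool) :=
  {b | ∀ i : Fin w.length, b i = w.get i}

/-- `μ` is the uniform probability measure on the space of branches of the infinite
binary tree: the infinite product of fair-coin Bernoulli(1/2) measures, characterized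
by giving each cylinder of a word of length `k` measure `2⁻ᵏ`. -/
def IsUniformBernoulli (μ : Measure (ℕ → Bool)) : Prop :=
  IsProbabilityMeasure μ ∧ ∀ w : List Bool, μ (cylinder w) = (2 : ENNReal)⁻¹ ^ w.length

/-- The length-`k` prefix of a branch `b`. -/
def branchPrefix (b : ℕ → Bool) (k : ℕ) : List Bool :=
  List.ofFn fun i : Fin k => b i

/-- `vecT T`: the set of branches all of whose finite prefixes belong to `T`. -/
def vecT (T : Set (List Bool)) : Set (ℕ → Bool) :=
  {b | ∀ k : ℕ, branchPrefix b k ∈ T}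

lemma mem_cylinder_branchPrefix (b : ℕ → Bool) (k : ℕ) : b ∈ cylinder (branchPrefix b k) := by
  intro i
  rw [List.get_eq_getElem]
  simp [branchPrefix]

lemma cylinder_anti {m n : List Bool} (h : m <+: n) : cylinder n ⊆ cylinder m := by
  intro b hb i
  have hlen : m.length ≤ n.length := h.length_le
  have hi : (i : ℕ) < n.length := lt_of_lt_of_le i.isLt hlen
  have := hb ⟨i, hi⟩
  simp only [List.get_eq_getElem] at this ⊢
  rw [this]
  exact (h.getElem i.isLt).symm

/-- Every measurable set of branches of positive measure contains `vec(T)` for some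
everywhere thick subtree `T` rooted at the empty word. -/
theorem stmt_0 (μ : Measure (ℕ → Bool)) (hμ : IsUniformBernoulli μ)
    (P : Set (ℕ → Bool)) (hmeas : MeasurableSet P) (hpos : 0 < μ P) :
    ∃ T : Set (List Bool),
      ([] : List Bool) ∈ T ∧
      (∀ n ∈ T, ∀ m : List Bool, m <+: n → m ∈ T) ∧
      (∀ n ∈ T, 0 < μ (vecT T ∩ cylinder n)) ∧
      vecT T ⊆ P := by
  haveI : IsProbabilityMeasure μ := hμ.1
  -- find a closed subset of positive measure
  obtain ⟨C, hCP, hCclosed, hCpos⟩ : ∃ C ⊆ P, IsClosed C ∧ 0 < μ C := by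
    obtain ⟨K, hKP, hK, hlt⟩ :=
      hmeas.exists_isCompact_lt_add (μ := μ) (measure_ne_top μ P) (ε := μ P) hpos.ne'
    refine ⟨K, hKP, hK.isClosed, ?_⟩
    by_contra h
    simp only [not_lt, nonpos_iff_eq_zero] at h
    rw [h, zero_add] at hlt
    exact lt_irrefl _ hlt
  -- the tree of nodes where C has positive measure
  set T : Set (List Bool) := {w | 0 < μ (C ∩ cylinder w)} with hT
  -- the null part of C outside vecT T
  set N : Set (ℕ → Bool) := ⋃ w ∈ Tᶜ, C ∩ cylinder w with hN
  have hNnull : μ N = 0 := by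
    refine measure_biUnion_null_iff (Set.to_countable _) |>.2 ?_
    intro w hw
    simpa [hT, not_lt, nonpos_iff_eq_zero] using hw
  have hsub : C \ N ⊆ vecT T := by
    intro b ⟨hbC, hbN⟩ k
    by_contra hk
    exact hbN (Set.mem_biUnion hk ⟨hbC, mem_cylinder_branchPrefix b k⟩)
  refine ⟨T, ?_, ?_, ?_, ?_⟩
  · -- root
    have : cylinder ([] : List Bool) = Set.univ := by
      ext b
      refine ⟨fun _ => trivial, fun _ i => i.elim0⟩
    simpa [hT, this] using hCpos
  · -- prefix closed
    intro n hn m hm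
    exact lt_of_lt_of_le hn (measure_mono (Set.inter_subset_inter_right _ (cylinder_anti hm)))
  · -- everywhere thick
    intro n hn
    have h1 : (C ∩ cylinder n) \ N ⊆ vecT T ∩ cylinder n := fun b hb =>
      ⟨hsub ⟨hb.1.1, hb.2⟩, hb.1.2⟩
    calc 0 < μ (C ∩ cylinder n) := hn
      _ = μ ((C ∩ cylinder n) \ N) := (measure_diff_null hNnull).symm
      _ ≤ μ (vecT T ∩ cylinder n) := measure_mono h1
  · -- vecT T ⊆ P
    intro b hb
    have hne : ∀ k : ℕ, (C ∩ cylinder (branchPrefix b k)).Nonempty := by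
      intro k
      exact nonempty_of_measure_ne_zero (hb k).ne'
    choose c hc using hne
    have htend : Filter.Tendsto c Filter.atTop (nhds b) := by
      rw [tendsto_pi_nhds]
      intro i
      refine Filter.Tendsto.congr' ?_ (tendsto_const_nhds (x := b i))
      filter_upwards [Filter.eventually_ge_atTop (i + 1)] with k hk
      have := (hc k).2 ⟨i, by simpa [branchPrefix] using hk⟩
      simp only [List.get_eq_getElem, branchPrefix, List.getElem_ofFn] at this
      exact this.symm
    have : b ∈ closure C :=
      mem_closure_of_tendsto htend (Filter.Eventually.of_forall fun k => (hc k).1)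
    exact hCP (hCclosed.closure_eq ▸ this)
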